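/- Let P be a parallelogram polyomino with min V(P) = (0,0). Then the join-irreducible elements of the lattice V(P) are exactly the minima of the maximal horizontal edge intervals of P and the minima of the maximal vertical edge intervals of P, excluding the vertex (0,0). Moreover, the minima h_1, …, h_n of the maximal horizontal edge intervals other than the one through (0,0) form a chain h_1 ≤ h_2 ≤ … ≤ h_n in V(P), and likewise the minima v_1, …, v_m of the maximal vertical edge intervals other than the one through (0,0) form a chain v_1 ≤ v_2 ≤ … ≤ v_m; these are two maximal chains of the poset of join-irreducible elements. -/
import Mathlib


open scoped Classical

/-- Lattice points of `ℕ²`; a cell is identified with its lower-left corner. -/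
abbrev Pt : Type := ℕ × ℕ

/-- The four vertices (corners) of the unit cell with lower-left corner `a`. -/
def cellVerts (a : Pt) : Finset Pt :=
  {a, (a.1 + 1, a.2), (a.1, a.2 + 1), (a.1 + 1, a.2 + 1)}

/-- The vertex set `V(P)` of a collection of cells. -/
def vertexSet (P : Finset Pt) : Finset Pt := P.biUnion cellVerts

/-- Two cells share an edge. -/
def cellAdj (a b : Pt) : Prop :=
  (a.1 = b.1 ∧ (a.2 = b.2 + 1 ∨ b.2 = a.2 + 1)) ∨
  (a.2 = b.2 ∧ (a.1 = b.1 + 1 ∨ b.1 = a.1 + 1))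

/-- Any two cells of `S` are joined by a sequence of edge-adjacent cells of `S`. -/
def CellConnected (S : Set Pt) : Prop :=
  ∀ a ∈ S, ∀ b ∈ S,
    Relation.ReflTransGen (fun x y => cellAdj x y ∧ x ∈ S ∧ y ∈ S) a b

/-- A polyomino: a nonempty, edge-connected finite collection of cells. -/
def IsPolyomino (P : Finset Pt) : Prop :=
  P.Nonempty ∧ CellConnected (↑P : Set Pt)

/-- A simple polyomino: the cells of `ℕ²` outside of `P` are also edge-connected. -/
def IsSimplePolyomino (P : Finset Pt) : Prop :=
  IsPolyomino P ∧ CellConnected ((↑P : Set Pt)ᶜ)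

/-- The cells of the interval `[a, b]` of `ℕ²`. -/
def intervalCells (a b : Pt) : Finset Pt :=
  Finset.Ico a.1 b.1 ×ˢ Finset.Ico a.2 b.2

/-- `[a, b]` is a proper interval all of whose cells belong to `P`
(an inner interval, also called a rectangle of `P`). -/
def IsInnerInterval (P : Finset Pt) (a b : Pt) : Prop :=
  a.1 < b.1 ∧ a.2 < b.2 ∧ intervalCells a b ⊆ P

/-- The ideal of inner 2-minors of a collection of cells `P`, in the polynomial
ring whose variables are indexed by a finite vertex set `V`. -/
noncomputable def innerMinorIdeal (K : Type*) [Field K] (V P : Finset Pt) :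
    Ideal (MvPolynomial {v : Pt // v ∈ V} K) :=
  Ideal.span { f | ∃ a b c d : {v : Pt // v ∈ V},
    IsInnerInterval P a.1 b.1 ∧
    c.1 = ((a.1).1, (b.1).2) ∧ d.1 = ((b.1).1, (a.1).2) ∧
    f = MvPolynomial.X a * MvPolynomial.X b - MvPolynomial.X c * MvPolynomial.X d }

/-- The polyomino ideal `I_P ⊆ K[x_v : v ∈ V(P)]`. -/
noncomputable def polyoIdeal (K : Type*) [Field K] (P : Finset Pt) :
    Ideal (MvPolynomial {v : Pt // v ∈ vertexSet P} K) :=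
  innerMinorIdeal K (vertexSet P) P

/-- The join-meet ideal of a finite sublattice `L` of `ℕ²`. -/
noncomputable def joinMeetIdeal (K : Type*) [Field K] (L : Finset Pt) :
    Ideal (MvPolynomial {v : Pt // v ∈ L} K) :=
  Ideal.span { f | ∃ a b c d : {v : Pt // v ∈ L},
    ¬ a.1 ≤ b.1 ∧ ¬ b.1 ≤ a.1 ∧ c.1 = a.1 ⊔ b.1 ∧ d.1 = a.1 ⊓ b.1 ∧
    f = MvPolynomial.X a * MvPolynomial.X b - MvPolynomial.X c * MvPolynomial.X d }

/-- A saturated chain in `L` from `a` to `b` whose consecutive elements differ by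
`(1,0)` or `(0,1)`. -/
def UnitChain (L : Finset Pt) (a b : Pt) : Prop :=
  ∃ (k : ℕ) (c : ℕ → Pt), c 0 = a ∧ c k = b ∧ (∀ i ≤ k, c i ∈ L) ∧
    ∀ i < k, c (i + 1) = c i + (1, 0) ∨ c (i + 1) = c i + (0, 1)

/-- The rank of a finite sublattice of `ℕ²` (whose minimum is `(0,0)`). -/
def latRank (L : Finset Pt) : ℕ := L.sup fun a => a.1 + a.2

/-- A simple planar distributive lattice: a finite sublattice of `ℕ²` containing
`(0,0)`, in which any two comparable elements are joined by a saturated chain of unit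
steps, and having at least two elements in each intermediate rank. -/
def IsSPDL (L : Finset Pt) : Prop :=
  (0, 0) ∈ L ∧
  (∀ a ∈ L, ∀ b ∈ L, a ⊔ b ∈ L ∧ a ⊓ b ∈ L) ∧
  (∀ a ∈ L, ∀ b ∈ L, a ≤ b → UnitChain L a b) ∧
  ∀ r : ℕ, 0 < r → r < latRank L → 2 ≤ (L.filter fun a => a.1 + a.2 = r).card

/-- The cells all of whose four vertices lie in `L`. -/
def cellsOf (L : Finset Pt) : Finset Pt := L.filter fun a => cellVerts a ⊆ L

/-- A north-east lattice path of length `k` starting at the origin. -/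
def IsNEPath (k : ℕ) (f : ℕ → Pt) : Prop :=
  f 0 = (0, 0) ∧ ∀ i < k, f (i + 1) = f i + (1, 0) ∨ f (i + 1) = f i + (0, 1)

/-- `P` is the parallelogram polyomino bounded above by the path `u` and below by
the path `l`, both of length `k`, meeting only at their endpoints. -/
def ParaData (P : Finset Pt) (k : ℕ) (u l : ℕ → Pt) : Prop :=
  0 < k ∧ IsNEPath k u ∧ IsNEPath k l ∧ u k = l k ∧
  (∀ i ≤ k, (u i).1 ≤ (l i).1) ∧
  (∀ i, 0 < i → i < k → u i ≠ l i) ∧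
  P.Nonempty ∧
  ∀ c : Pt, c ∈ P ↔
    ∀ v ∈ cellVerts c, v.1 + v.2 ≤ k ∧ (u (v.1 + v.2)).1 ≤ v.1 ∧ v.1 ≤ (l (v.1 + v.2)).1

/-- A parallelogram polyomino. -/
def IsParaPoly (P : Finset Pt) : Prop := ∃ k u l, ParaData P k u l

/-- `F` is a set of non-attacking rooks on `P`. -/
def NonAttacking (P : Finset Pt) (F : Finset Pt) : Prop :=
  F ⊆ P ∧ ∀ a ∈ F, ∀ b ∈ F, a ≠ b → a.1 ≠ b.1 ∧ a.2 ≠ b.2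

/-- A switch: inside a rectangle `[a,b]` of `P`, replace the diagonal pair of cells by
the antidiagonal pair, or vice versa. -/
def SwitchStep (P : Finset Pt) (F G : Finset Pt) : Prop :=
  ∃ a b : Pt, IsInnerInterval P a b ∧
    ((a ∈ F ∧ (b.1 - 1, b.2 - 1) ∈ F ∧
       G = F \ {a, (b.1 - 1, b.2 - 1)} ∪ {(a.1, b.2 - 1), (b.1 - 1, a.2)}) ∨
     ((a.1, b.2 - 1) ∈ F ∧ (b.1 - 1, a.2) ∈ F ∧
       G = F \ {(a.1, b.2 - 1), (b.1 - 1, a.2)} ∪ {a, (b.1 - 1, b.2 - 1)}))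

/-- The number `|R̃_k|` of equivalence classes (under finitely many switches) of sets of
`k` non-attacking rooks on `P`. -/
noncomputable def rtilde (P : Finset Pt) (k : ℕ) : ℕ :=
  Nat.card (Quot fun F G : {F : Finset Pt // NonAttacking P F ∧ F.card = k} =>
    SwitchStep P F.1 G.1)

/-- The rook number `r(P)`: the maximum number of non-attacking rooks on `P`. -/
noncomputable def rookNum (P : Finset Pt) : ℕ :=
  (P.powerset.filter fun F => NonAttacking P F).sup Finset.card

/-- The Hilbert function of `K[P] = K[x_v : v ∈ V(P)]/I_P`. -/
noncomputable def hilbertFn (K : Type*) [Field K] (P : Finset Pt) (k : ℕ) : ℕ :=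
  Module.finrank K
    ↥(Submodule.map (Ideal.Quotient.mkₐ K (polyoIdeal K P)).toLinearMap
      (MvPolynomial.homogeneousSubmodule {v : Pt // v ∈ vertexSet P} K k))

/-- The Hilbert–Poincaré series of `K[P]`, as a formal power series over `ℤ`. -/
noncomputable def hilbertSeries (K : Type*) [Field K] (P : Finset Pt) : PowerSeries ℤ :=
  PowerSeries.mk fun k => (hilbertFn K P k : ℤ)

/-- `[a,b]` is a maximal rectangle of `P`. -/
def MaximalRect (P : Finset Pt) (a b : Pt) : Prop :=
  IsInnerInterval P a b ∧
  ∀ a' b', IsInnerInterval P a' b' → a' ≤ a → b ≤ b' → a' = a ∧ b' = b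

/-- The rectangle `[sa,sb]` of `P` is a single rectangle whose unique maximal rectangle
is `[ra,rb]`: it is contained in `[ra,rb]` and shares no cell with any other maximal
rectangle of `P`. -/
def SingleRectOf (P : Finset Pt) (ra rb sa sb : Pt) : Prop :=
  IsInnerInterval P sa sb ∧ ra ≤ sa ∧ sb ≤ rb ∧
  ∀ ra' rb', MaximalRect P ra' rb' → ¬(ra' = ra ∧ rb' = rb) →
    ∀ c ∈ intervalCells sa sb, c ∉ intervalCells ra' rb'

/-- `P` has the S-property: every maximal rectangle of `P` has a unique single square. -/
def HasSProperty (P : Finset Pt) : Prop :=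
  ∀ ra rb, MaximalRect P ra rb →
    ∃! s : Pt × Pt,
      SingleRectOf P ra rb s.1 s.2 ∧ s.2.1 - s.1.1 = s.2.2 - s.1.2

/-- `P` is shortenable: removing the unique maximal rectangle `R₀` containing `(0,0)`
leaves (up to translation) a parallelogram polyomino. -/
def Shortenable (P : Finset Pt) : Prop :=
  ∃ b₀, MaximalRect P (0, 0) b₀ ∧
    ∃ (w : Pt) (Q : Finset Pt), IsParaPoly Q ∧
      P \ intervalCells (0, 0) b₀ = Q.image fun c => c + w

/-- `P` is well-shortenable: it is shortenable, and `P ∖ R₀` is (up to translation)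
either a rectangle or again a well-shortenable parallelogram polyomino. -/
inductive WellShortenable : Finset Pt → Prop
  | base (P : Finset Pt) (b₀ : Pt) (hmax : MaximalRect P (0, 0) b₀)
      (w : Pt) (Q : Finset Pt) (hQ : IsParaPoly Q)
      (heq : P \ intervalCells (0, 0) b₀ = Q.image fun c => c + w)
      (hrect : ∃ a b : Pt, Q = intervalCells a b) : WellShortenable P
  | step (P : Finset Pt) (b₀ : Pt) (hmax : MaximalRect P (0, 0) b₀)
      (w : Pt) (Q : Finset Pt) (hQ : IsParaPoly Q)
      (heq : P \ intervalCells (0, 0) b₀ = Q.image fun c => c + w)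
      (hws : WellShortenable Q) : WellShortenable P

/-- `a` is a join-irreducible element of the finite lattice `L ⊆ ℕ²`
(whose minimum is `(0,0)`). -/
def JoinIrred (L : Finset Pt) (a : Pt) : Prop :=
  a ∈ L ∧ a ≠ (0, 0) ∧ ∀ b ∈ L, ∀ c ∈ L, a = b ⊔ c → a = b ∨ a = c

/-- `c` is a maximal chain of the subposet `J` of `ℕ²`. -/
def MaxChainIn (J : Set Pt) (c : Set Pt) : Prop :=
  c ⊆ J ∧ IsChain (· ≤ ·) c ∧
  ∀ c', c' ⊆ J → IsChain (· ≤ ·) c' → c ⊆ c' → c = c'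

/-- The subposet `J` of `ℕ²` is pure: all its maximal chains have the same length. -/
def PurePoset (J : Set Pt) : Prop :=
  ∀ c₁ c₂, MaxChainIn J c₁ → MaxChainIn J c₂ → c₁.ncard = c₂.ncard

/-- A maximal chain of a simple planar distributive lattice `L`, viewed as a monotone
lattice path of unit steps from `(0,0)` to `max L`. -/
def IsMaxLatticeChain (L : Finset Pt) (N : ℕ) (c : ℕ → Pt) : Prop :=
  c 0 = (0, 0) ∧ (∀ i ≤ N, c i ∈ L) ∧ (∀ a ∈ L, a ≤ c N) ∧
  ∀ i < N, c (i + 1) = c i + (1, 0) ∨ c (i + 1) = c i + (0, 1)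

/-- The chain `c` has a descent at the cell with lower-left corner `a`. -/
def DescentCell (L : Finset Pt) (N : ℕ) (c : ℕ → Pt) (a : Pt) : Prop :=
  cellVerts a ⊆ L ∧
  ∃ s, s + 2 ≤ N ∧ c s = a ∧ c (s + 1) = (a.1 + 1, a.2) ∧ c (s + 2) = (a.1 + 1, a.2 + 1)

/-- The `i`-th step of the path `f` is a north step. -/
def NorthStep (f : ℕ → Pt) (i : ℕ) : Prop := f (i + 1) = f i + (0, 1)

/-- The `i`-th step of the path `f` is an east step. -/
def EastStep (f : ℕ → Pt) (i : ℕ) : Prop := f (i + 1) = f i + (1, 0)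

/-- `[i, i+c)` is a maximal run of steps satisfying `Q` in a path of length `k`. -/
def MaxRun (Q : ℕ → Prop) (k i c : ℕ) : Prop :=
  0 < c ∧ i + c ≤ k ∧ (∀ j, i ≤ j → j < i + c → Q j) ∧
  (i = 0 ∨ ¬ Q (i - 1)) ∧ (i + c = k ∨ ¬ Q (i + c))

/-- The `i`-th step of the 2-colored Motzkin path associated to the pair of paths
`(u, l)` is a rise step. -/
def RiseStep (u l : ℕ → Pt) (i : ℕ) : Prop := NorthStep u i ∧ EastStep l i

/-- Fall step of the associated 2-colored Motzkin path. -/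
def FallStep (u l : ℕ → Pt) (i : ℕ) : Prop := EastStep u i ∧ NorthStep l i

/-- `α`-colored horizontal step of the associated 2-colored Motzkin path. -/
def AlphaStep (u l : ℕ → Pt) (i : ℕ) : Prop := NorthStep u i ∧ NorthStep l i

/-- `β`-colored horizontal step of the associated 2-colored Motzkin path. -/
def BetaStep (u l : ℕ → Pt) (i : ℕ) : Prop := EastStep u i ∧ EastStep l i

/-- Row convexity of a collection of cells. -/
def RowConvex (P : Finset Pt) : Prop :=
  ∀ i j k : ℕ, (i, j) ∈ P → (k, j) ∈ P → ∀ l, i ≤ l → l ≤ k → (l, j) ∈ P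

/-- Column convexity of a collection of cells. -/
def ColConvex (P : Finset Pt) : Prop :=
  ∀ i j k : ℕ, (i, j) ∈ P → (i, k) ∈ P → ∀ l, j ≤ l → l ≤ k → (i, l) ∈ P

/-- `{(r,j),(r+1,j)}` is a horizontal edge of a cell of `P`. -/
def HEdge (P : Finset Pt) (r j : ℕ) : Prop :=
  (r, j) ∈ P ∨ (0 < j ∧ (r, j - 1) ∈ P)

/-- `{(i,r),(i,r+1)}` is a vertical edge of a cell of `P`. -/
def VEdge (P : Finset Pt) (i r : ℕ) : Prop :=
  (i, r) ∈ P ∨ (0 < i ∧ (i - 1, r) ∈ P)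

/-- `[(i,j),(k,j)]` is a maximal horizontal edge interval of `P`. -/
def MaxHInterval (P : Finset Pt) (i k j : ℕ) : Prop :=
  i < k ∧ (∀ r, i ≤ r → r < k → HEdge P r j) ∧
  ∀ i' k', i' < k' → (∀ r, i' ≤ r → r < k' → HEdge P r j) → i' ≤ i → k ≤ k' →
    i' = i ∧ k' = k

/-- `[(i,j),(i,l)]` is a maximal vertical edge interval of `P`. -/
def MaxVInterval (P : Finset Pt) (i j l : ℕ) : Prop :=
  j < l ∧ (∀ r, j ≤ r → r < l → VEdge P i r) ∧
  ∀ j' l', j' < l' → (∀ r, j' ≤ r → r < l' → VEdge P i r) → j' ≤ j → l ≤ l' →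
    j' = j ∧ l' = l

/-- The minima of the maximal horizontal edge intervals of `P`. -/
def HMins (P : Finset Pt) : Set Pt := {a | ∃ k, MaxHInterval P a.1 k a.2}

/-- The minima of the maximal vertical edge intervals of `P`. -/
def VMins (P : Finset Pt) : Set Pt := {a | ∃ l, MaxVInterval P a.1 a.2 l}

namespace S19

structure Good (k : ℕ) (f g : ℕ → ℕ) : Prop where
  f0 : f 0 = 0
  g0 : g 0 = 0
  fstep : ∀ s, s < k → f (s+1) = f s ∨ f (s+1) = f s + 1
  gstep : ∀ s, s < k → g (s+1) = g s ∨ g (s+1) = g s + 1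
  fg : ∀ s, s ≤ k → f s ≤ g s
  fg' : ∀ s, 0 < s → s < k → f s < g s
  top : f k = g k
  k2 : 2 ≤ k

variable {k : ℕ} {f g : ℕ → ℕ}

section StepFacts

variable {h : ℕ → ℕ}

lemma mono_of_step (hs : ∀ s, s < k → h (s+1) = h s ∨ h (s+1) = h s + 1)
    {s t : ℕ} (hst : s ≤ t) (htk : t ≤ k) : h s ≤ h t := by
  induction t with
  | zero => simp [Nat.le_zero.mp hst]
  | succ n ih =>
    rcases Nat.lt_succ_iff_lt_or_eq.mp (Nat.lt_succ_of_le hst) with h' | h'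
    · have h1 : h s ≤ h n := ih (by omega) (by omega)
      rcases hs n (by omega) with e | e <;> omega
    · subst h'; exact le_rfl

lemma add_of_step (hs : ∀ s, s < k → h (s+1) = h s ∨ h (s+1) = h s + 1)
    {s t : ℕ} (hst : s ≤ t) (htk : t ≤ k) : h t ≤ h s + (t - s) := by
  induction t with
  | zero => simp [Nat.le_zero.mp hst]
  | succ n ih =>
    rcases Nat.lt_succ_iff_lt_or_eq.mp (Nat.lt_succ_of_le hst) with h' | h'
    · have h1 : h n ≤ h s + (n - s) := ih (by omega) (by omega)
      rcases hs n (by omega) with e | e <;> omega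
    · subst h'; simp

end StepFacts

lemma Good.fmono (G : Good k f g) {s t : ℕ} (hst : s ≤ t) (htk : t ≤ k) : f s ≤ f t :=
  mono_of_step G.fstep hst htk

lemma Good.gmono (G : Good k f g) {s t : ℕ} (hst : s ≤ t) (htk : t ≤ k) : g s ≤ g t :=
  mono_of_step G.gstep hst htk

lemma Good.fadd (G : Good k f g) {s t : ℕ} (hst : s ≤ t) (htk : t ≤ k) :
    f t ≤ f s + (t - s) := add_of_step G.fstep hst htk

lemma Good.gadd (G : Good k f g) {s t : ℕ} (hst : s ≤ t) (htk : t ≤ k) :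
    g t ≤ g s + (t - s) := add_of_step G.gstep hst htk

lemma Good.fle (G : Good k f g) {s : ℕ} (hsk : s ≤ k) : f s ≤ s := by
  have := G.fadd (Nat.zero_le s) hsk
  have := G.f0; omega

lemma Good.gle (G : Good k f g) {s : ℕ} (hsk : s ≤ k) : g s ≤ s := by
  have := G.gadd (Nat.zero_le s) hsk
  have := G.g0; omega

lemma Good.f1 (G : Good k f g) : f 1 = 0 ∧ g 1 = 1 := by
  have h1 : f 1 < g 1 := G.fg' 1 one_pos (by have := G.k2; omega)
  have h2 : f 1 ≤ 1 := G.fle (by have := G.k2; omega)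
  have h3 : g 1 ≤ 1 := G.gle (by have := G.k2; omega)
  omega

lemma Good.fk_pos (G : Good k f g) : 1 ≤ f k := by
  have h1 : g 1 ≤ g k := G.gmono (by have := G.k2; omega) le_rfl
  have := G.f1; have := G.top; omega

lemma Good.fk_lt (G : Good k f g) : f k < k := by
  have hk := G.k2
  have h1 : f (k-1) < g (k-1) := G.fg' (k-1) (by omega) (by omega)
  have h2 : g (k-1) ≤ k - 1 := G.gle (by omega)
  have h3 : f k ≤ f (k-1) + (k - (k-1)) := G.fadd (by omega) le_rfl
  have h4 : g (k-1) ≤ g k := G.gmono (by omega) le_rfl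
  have := G.top
  omega

lemma Good.fkm (G : Good k f g) : f (k-1) + 1 ≤ f k := by
  have hk := G.k2
  have h1 : f (k-1) < g (k-1) := G.fg' (k-1) (by omega) (by omega)
  have h4 : g (k-1) ≤ g k := G.gmono (by omega) le_rfl
  have := G.top; omega

lemma Good.gkm (G : Good k f g) : f k ≤ g (k-1) := by
  have hk := G.k2
  have h1 : f (k-1) < g (k-1) := G.fg' (k-1) (by omega) (by omega)
  have h3 : f k ≤ f (k-1) + (k - (k-1)) := G.fadd (by omega) le_rfl
  have h4 : g k ≤ g (k-1) + (k - (k-1)) := G.gadd (by omega) le_rfl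
  have := G.top; omega

/-- cells -/
def CellF (k : ℕ) (f g : ℕ → ℕ) (x j : ℕ) : Prop :=
  x + j + 2 ≤ k ∧ f (x + j + 1) ≤ x ∧ x + 1 ≤ g (x + j + 1)

/-- vertices -/
def VFp (k : ℕ) (f g : ℕ → ℕ) (x y : ℕ) : Prop :=
  x + y ≤ k ∧ f (x + y) ≤ x ∧ x ≤ g (x + y)

/-- horizontal edges at height `j` -/
def EdgeF (k : ℕ) (f g : ℕ → ℕ) (r j : ℕ) : Prop :=
  CellF k f g r j ∨ (0 < j ∧ CellF k f g r (j - 1))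

noncomputable def minE (k : ℕ) (f g : ℕ → ℕ) (j : ℕ) : ℕ := sInf {r | EdgeF k f g r j}

def MaxIFp (k : ℕ) (f g : ℕ → ℕ) (i m j : ℕ) : Prop :=
  i < m ∧ (∀ r, i ≤ r → r < m → EdgeF k f g r j) ∧
  ∀ i' k', i' < k' → (∀ r, i' ≤ r → r < k' → EdgeF k f g r j) → i' ≤ i → m ≤ k' →
    i' = i ∧ k' = m

lemma cell_corners (G : Good k f g) {x j : ℕ} (h : CellF k f g x j) :
    VFp k f g x j ∧ VFp k f g (x+1) j ∧ VFp k f g x (j+1) ∧ VFp k f g (x+1) (j+1) := by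
  obtain ⟨h1, h2, h3⟩ := h
  have e1 : f (x+j) ≤ f (x+j+1) := G.fmono (by omega) (by omega)
  have e2 : g (x+j+1) ≤ g (x+j) + 1 := by
    have := G.gadd (s := x+j) (t := x+j+1) (by omega) (by omega); omega
  have e3 : f (x+j+2) ≤ f (x+j+1) + 1 := by
    have := G.fadd (s := x+j+1) (t := x+j+2) (by omega) (by omega); omega
  have e4 : g (x+j+1) ≤ g (x+j+2) := G.gmono (by omega) (by omega)
  have i1 : x + 1 + j = x + j + 1 := by omega
  have i2 : x + (j+1) = x + j + 1 := by omega
  have i3 : x + 1 + (j+1) = x + j + 2 := by omega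
  refine ⟨⟨by omega, by omega, by omega⟩, ⟨by omega, ?_, ?_⟩, ⟨by omega, ?_, ?_⟩,
    ⟨by omega, ?_, ?_⟩⟩
  · rw [i1]; omega
  · rw [i1]; omega
  · rw [i2]; omega
  · rw [i2]; omega
  · rw [i3]; omega
  · rw [i3]; omega

lemma row_convex (G : Good k f g) {x1 x2 x j : ℕ} (h1 : CellF k f g x1 j)
    (h2 : CellF k f g x2 j) (hx1 : x1 ≤ x) (hx2 : x ≤ x2) : CellF k f g x j := by
  obtain ⟨a1, a2, a3⟩ := h1
  obtain ⟨b1, b2, b3⟩ := h2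
  refine ⟨by omega, ?_, ?_⟩
  · have := G.fadd (s := x1+j+1) (t := x+j+1) (by omega) (by omega); omega
  · have := G.gadd (s := x+j+1) (t := x2+j+1) (by omega) (by omega); omega

lemma gap (G : Good k f g) {p s j : ℕ} (h1 : CellF k f g p j) (h2 : CellF k f g s (j+1))
    (hps : p + 2 ≤ s) : CellF k f g (p+1) j ∨ CellF k f g (p+1) (j+1) := by
  by_contra hcon
  push_neg at hcon
  obtain ⟨hc1, hc2⟩ := hcon
  obtain ⟨a1, a2, a3⟩ := h1
  obtain ⟨b1, b2, b3⟩ := h2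
  -- cell (p+1, j) fails
  have k1 : p + 1 + j + 2 ≤ k := by omega
  have e1 : f (p+j+2) ≤ f (p+j+1) + 1 := by
    have := G.fadd (s := p+j+1) (t := p+j+2) (by omega) (by omega); omega
  have hc1' : ¬ (f (p+1+j+1) ≤ p+1 ∧ p+2 ≤ g (p+1+j+1)) := by
    intro ⟨u1, u2⟩; exact hc1 ⟨k1, by omega, by omega⟩
  have hidx : p+1+j+1 = p+j+2 := by omega
  rw [hidx] at hc1'
  have hg1 : g (p+j+1) ≤ g (p+j+2) := G.gmono (by omega) (by omega)
  -- so g(p+j+2) ≤ p+1, hence g(p+j+2) = p+1 (since g(p+j+1) ≥ p+1)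
  have hgval : g (p+j+2) = p + 1 := by omega
  -- cell (p+1, j+1) fails
  have k2' : p + 1 + (j+1) + 2 ≤ k := by omega
  have hgb : g (p+j+3) ≤ g (s+(j+1)+1) := by
    apply G.gmono (by omega) (by omega)
  have hgc : g (s+j+2) ≤ g (p+j+3) + (s+j+2 - (p+j+3)) := G.gadd (by omega) (by omega)
  have hidx2 : s+(j+1)+1 = s+j+2 := by omega
  rw [hidx2] at hgb
  -- g (p+j+3) ≥ ? : from b3 : s+1 ≤ g (s+(j+1)+1) = g (s+j+2)
  rw [hidx2] at b3
  have hg3 : p + 2 + 1 ≤ g (p+j+3) + 1 := by omega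
  have hc2' : ¬ (f (p+1+(j+1)+1) ≤ p+1 ∧ p+2 ≤ g (p+1+(j+1)+1)) := by
    intro ⟨u1, u2⟩; exact hc2 ⟨k2', by omega, by omega⟩
  have hidx3 : p+1+(j+1)+1 = p+j+3 := by omega
  rw [hidx3] at hc2'
  have hf3 : f (p+j+3) ≥ p + 2 := by omega
  -- strictness at p+j+2
  have hstrict : f (p+j+2) < g (p+j+2) := G.fg' _ (by omega) (by omega)
  have : f (p+j+3) ≤ f (p+j+2) + 1 := by
    have := G.fadd (s := p+j+2) (t := p+j+3) (by omega) (by omega); omega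
  omega

lemma down (G : Good k f g) {j : ℕ} : ∀ x, CellF k f g x (j+1) → ∃ x' ≤ x, CellF k f g x' j := by
  intro x
  induction x using Nat.strong_induction_on with
  | _ x ih =>
    intro hx
    obtain ⟨b1, b2, b3⟩ := hx
    by_cases hc : CellF k f g x j
    · exact ⟨x, le_rfl, hc⟩
    · -- x ≥ 1 and (x-1, j+1) ∈ cells
      have hfm : f (x+j+1) ≤ f (x+(j+1)+1) := G.fmono (by omega) (by omega)
      have hgm : g (x+(j+1)+1) ≤ g (x+j+1) + 1 := by
        have := G.gadd (s := x+j+1) (t := x+(j+1)+1) (by omega) (by omega); omega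
      have hc' : ¬ (f (x+j+1) ≤ x ∧ x + 1 ≤ g (x+j+1)) := fun ⟨u1, u2⟩ => hc ⟨by omega, u1, u2⟩
      have hgval : g (x+j+1) = x := by omega
      -- x ≥ 1 : else g (j+1) = 0 contradicting strictness
      have hxpos : 0 < x := by
        rcases Nat.eq_zero_or_pos x with hx0 | h
        · exfalso
          have hs : f (x+j+1) < g (x+j+1) := G.fg' _ (by omega) (by omega)
          omega
        · exact h
      have hstrict : f (x+j+1) < g (x+j+1) := G.fg' _ (by omega) (by omega)
      have hnew : CellF k f g (x-1) (j+1) := by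
        refine ⟨by omega, ?_, ?_⟩
        · have : x-1+(j+1)+1 = x+j+1 := by omega
          rw [this]; omega
        · have : x-1+(j+1)+1 = x+j+1 := by omega
          rw [this]; omega
      obtain ⟨x', hx', hcx'⟩ := ih (x-1) (by omega) hnew
      exact ⟨x', by omega, hcx'⟩

lemma overlap (G : Good k f g) {j : ℕ} :
    ∀ d p r, CellF k f g p j → CellF k f g (p + d) (j+1) → p ≤ r → r ≤ p + d →
      CellF k f g r j ∨ CellF k f g r (j+1) := by
  intro d
  induction d with
  | zero =>
    intro p r h1 _ hpr hrp
    have hrp' : r = p := by omega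
    rw [hrp']
    exact Or.inl h1
  | succ d ih =>
    intro p r h1 h2 hpr hrp
    rcases Nat.eq_or_lt_of_le hpr with he | h'
    · rw [← he]; exact Or.inl h1
    · by_cases hd : d = 0
      · have hr1 : r = p + 1 := by omega
        have he2 : p + (d + 1) = p + 1 := by omega
        rw [hr1]
        rw [he2] at h2
        exact Or.inr h2
      · rcases gap G h1 h2 (by omega) with hg | hg
        · have h2' : CellF k f g (p + 1 + d) (j+1) := by
            have e : p + 1 + d = p + (d+1) := by omega
            rw [e]; exact h2
          exact ih (p+1) r hg h2' (by omega) (by omega)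
        · exact Or.inr (row_convex G hg h2 (by omega) (by omega))

lemma edge_convex (G : Good k f g) {r1 r2 r3 j : ℕ} (h1 : EdgeF k f g r1 j)
    (h3 : EdgeF k f g r3 j) (h12 : r1 ≤ r2) (h23 : r2 ≤ r3) : EdgeF k f g r2 j := by
  match j with
  | 0 =>
    have h1' : CellF k f g r1 0 := by
      rcases h1 with h1 | ⟨h, _⟩
      · exact h1
      · exact absurd h (lt_irrefl 0)
    have h3' : CellF k f g r3 0 := by
      rcases h3 with h3 | ⟨h, _⟩
      · exact h3
      · exact absurd h (lt_irrefl 0)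
    exact Or.inl (row_convex G h1' h3' h12 h23)
  | (j'+1) =>
    have hs : (j' + 1) - 1 = j' := by omega
    rw [EdgeF, hs] at h1 h3 ⊢
    rcases h1 with h1 | ⟨_, h1⟩ <;> rcases h3 with h3 | ⟨_, h3⟩
    · exact Or.inl (row_convex G h1 h3 h12 h23)
    · -- r1 in row j'+1, r3 in row j' : use down
      obtain ⟨x', hx', hc⟩ := down G r1 h1
      exact Or.inr ⟨by omega, row_convex G hc h3 (by omega) h23⟩
    · -- r1 in row j', r3 in row j'+1
      obtain ⟨d, rfl⟩ : ∃ d, r3 = r1 + d := ⟨r3 - r1, by omega⟩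
      rcases overlap G d r1 r2 h1 h3 h12 h23 with h | h
      · exact Or.inr ⟨by omega, h⟩
      · exact Or.inl h
    · exact Or.inr ⟨by omega, row_convex G h1 h3 h12 h23⟩

lemma edge_lt (G : Good k f g) {r j : ℕ} (h : EdgeF k f g r j) : r + 2 ≤ k := by
  rcases h with ⟨h, _⟩ | ⟨_, ⟨h, _⟩⟩ <;> omega

lemma edge_height (G : Good k f g) {r j : ℕ} (h : EdgeF k f g r j) : f k + j ≤ k := by
  have key : ∀ x j', CellF k f g x j' → f k + j' + 1 ≤ k := by
    intro x j' ⟨h1, h2, h3⟩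
    have := G.fadd (s := x + j' + 1) (t := k) (by omega) le_rfl
    omega
  rcases h with h | ⟨hj, h⟩
  · have := key _ _ h; omega
  · have := key _ _ h; omega

lemma cell00 (G : Good k f g) : CellF k f g 0 0 := by
  obtain ⟨hf1, hg1⟩ := G.f1
  exact ⟨G.k2, by simpa using hf1.le, by simp [hg1]⟩

lemma exists_cell_row (G : Good k f g) {j : ℕ} (hj : f k + j + 1 ≤ k) :
    ∃ x, CellF k f g x j := by
  have hkne : k ∈ {s | f s + (j+1) ≤ s} := by simp only [Set.mem_setOf_eq]; omega
  set s0 := sInf {s | f s + (j+1) ≤ s} with hs0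
  have hmem : s0 ∈ {s | f s + (j+1) ≤ s} := Nat.sInf_mem ⟨k, hkne⟩
  have hs0k : s0 ≤ k := Nat.sInf_le hkne
  have hs0pos : 0 < s0 := by
    rcases Nat.eq_zero_or_pos s0 with h | h
    · exfalso; rw [h] at hmem; simp only [Set.mem_setOf_eq] at hmem
      have := G.f0; omega
    · exact h
  have hprev : ¬ (f (s0 - 1) + (j+1) ≤ s0 - 1) := by
    intro hcon
    have : s0 ≤ s0 - 1 := Nat.sInf_le hcon
    omega
  simp only [Set.mem_setOf_eq] at hmem
  have hstep : f s0 ≤ f (s0 - 1) + 1 := by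
    have := G.fadd (s := s0 - 1) (t := s0) (by omega) hs0k; omega
  have hmono : f (s0 - 1) ≤ f s0 := G.fmono (by omega) hs0k
  -- f (s0 - 1) = f s0 and f s0 + (j+1) = s0
  have heq : f s0 + (j + 1) = s0 := by omega
  rcases Nat.lt_or_ge s0 k with hlt | hge
  · refine ⟨f s0, ⟨by omega, ?_, ?_⟩⟩
    · have : f s0 + j + 1 = s0 := by omega
      rw [this]
    · have : f s0 + j + 1 = s0 := by omega
      rw [this]
      exact G.fg' s0 (by omega) hlt
  · -- s0 = k
    have hs0eq : s0 = k := by omega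
    rw [hs0eq] at heq
    have hfk := G.fk_pos
    refine ⟨f k - 1, ⟨by omega, ?_, ?_⟩⟩
    · have hix : f k - 1 + j + 1 = k - 1 := by omega
      rw [hix]
      have := G.fkm; omega
    · have hix : f k - 1 + j + 1 = k - 1 := by omega
      rw [hix]
      have := G.gkm; omega

lemma edge_exists_iff (G : Good k f g) {j : ℕ} :
    (∃ r, EdgeF k f g r j) ↔ f k + j ≤ k := by
  constructor
  · rintro ⟨r, h⟩; exact edge_height G h
  · intro hj
    match j with
    | 0 => exact ⟨0, Or.inl (cell00 G)⟩
    | (j'+1) =>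
      obtain ⟨x, hx⟩ := exists_cell_row G (j := j') (by omega)
      exact ⟨x, Or.inr ⟨by omega, by simpa using hx⟩⟩

lemma minE_le {j r : ℕ} (h : EdgeF k f g r j) : minE k f g j ≤ r := Nat.sInf_le h

lemma minE_mem {j : ℕ} (h : ∃ r, EdgeF k f g r j) : EdgeF k f g (minE k f g j) j :=
  Nat.sInf_mem h

lemma minE0 (G : Good k f g) : minE k f g 0 = 0 :=
  Nat.eq_zero_of_le_zero (Nat.sInf_le (Or.inl (cell00 G)))

lemma minE1 (G : Good k f g) : minE k f g 1 = 0 :=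
  Nat.eq_zero_of_le_zero (Nat.sInf_le (Or.inr ⟨one_pos, by simpa using cell00 G⟩))

lemma minE_mono (G : Good k f g) {j : ℕ} (h : ∃ r, EdgeF k f g r (j+1)) :
    minE k f g j ≤ minE k f g (j+1) := by
  have hm := minE_mem h
  rcases hm with hm | ⟨_, hm⟩
  · obtain ⟨x', hx', hc⟩ := down G _ hm
    exact le_trans (minE_le (Or.inl hc)) hx'
  · simp only [Nat.add_sub_cancel] at hm
    exact minE_le (Or.inl hm)

lemma minE_mono' (G : Good k f g) {j j' : ℕ} (hjj : j ≤ j') (h : ∃ r, EdgeF k f g r j') :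
    minE k f g j ≤ minE k f g j' := by
  have hht : f k + j' ≤ k := by
    obtain ⟨r, hr⟩ := h; exact edge_height G hr
  have key : ∀ d, j + d ≤ j' → minE k f g j ≤ minE k f g (j + d) := by
    intro d
    induction d with
    | zero => intro _; simp
    | succ d ih =>
      intro hd
      have hd1 := ih (by omega)
      have hd2 : minE k f g (j+d) ≤ minE k f g (j+d+1) := by
        apply minE_mono G
        rw [edge_exists_iff G]
        omega
      have e : j + (d+1) = j + d + 1 := by omega
      rw [e]
      omega
  have hk := key (j' - j) (by omega)
  have e : j + (j' - j) = j' := by omega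
  rwa [e] at hk

lemma maxI_iff (G : Good k f g) {i j : ℕ} :
    (∃ m, MaxIFp k f g i m j) ↔ ((∃ r, EdgeF k f g r j) ∧ i = minE k f g j) := by
  constructor
  · rintro ⟨m, him, hrun, hmax⟩
    have hi : EdgeF k f g i j := hrun i le_rfl him
    have hne : ∃ r, EdgeF k f g r j := ⟨i, hi⟩
    refine ⟨hne, ?_⟩
    have hle : minE k f g j ≤ i := minE_le hi
    have hrun' : ∀ r, minE k f g j ≤ r → r < m → EdgeF k f g r j := by
      intro r hr1 hr2
      rcases Nat.lt_or_ge r i with h' | h'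
      · exact edge_convex G (minE_mem hne) hi hr1 (by omega)
      · exact hrun r h' hr2
    exact ((hmax _ m (by omega) hrun' hle le_rfl).1).symm
  · rintro ⟨hne, rfl⟩
    obtain ⟨r0, hr0⟩ := hne
    have hr0k : r0 + 2 ≤ k := edge_lt G hr0
    set m0 := Nat.findGreatest (fun r => EdgeF k f g r j) k with hm0
    have hr0m : r0 ≤ m0 := Nat.le_findGreatest (by omega) hr0
    have hm0mem : EdgeF k f g m0 j := by
      rcases Nat.eq_zero_or_pos m0 with h | h
      · have : r0 = 0 := by omega
        rw [h, ← this]; exact hr0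
      · exact Nat.findGreatest_spec (P := fun r => EdgeF k f g r j) (m := r0) (by omega) hr0
  
    have hmin_le : minE k f g j ≤ m0 := minE_le hm0mem
    refine ⟨m0 + 1, by omega, ?_, ?_⟩
    · intro r hr1 hr2
      exact edge_convex G (minE_mem ⟨r0, hr0⟩) hm0mem hr1 (by omega)
    · intro i' k' hik hrun' hi' hk'
      have he1 : EdgeF k f g i' j := hrun' i' le_rfl (by omega)
      have he2 : EdgeF k f g (k'-1) j := hrun' (k'-1) (by omega) (by omega)
      have hg1 : minE k f g j ≤ i' := minE_le he1
      have hg2 : k' - 1 ≤ m0 := by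
        by_contra hcon
        exact Nat.findGreatest_is_greatest (P := fun r => EdgeF k f g r j) (n := k)
          (by omega) (by have := edge_lt G he2; omega) he2
      omega

lemma edge_vf (G : Good k f g) {r j : ℕ} (h : EdgeF k f g r j) : VFp k f g r j := by
  rcases h with h | ⟨hj, h⟩
  · exact (cell_corners G h).1
  · have := (cell_corners G h).2.2.1
    have hx : j - 1 + 1 = j := by omega
    rwa [hx] at this

lemma vf_below (G : Good k f g) {x b2 y : ℕ} (hb : VFp k f g x b2) (ha : VFp k f g x (y+1))
    (hby : b2 ≤ y) : VFp k f g x y := by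
  obtain ⟨a1, a2, a3⟩ := ha
  obtain ⟨c1, c2, c3⟩ := hb
  refine ⟨by omega, ?_, ?_⟩
  · have : f (x + y) ≤ f (x + (y+1)) := G.fmono (by omega) (by omega)
    omega
  · have : g (x + b2) ≤ g (x + y) := G.gmono (by omega) (by omega)
    omega

lemma vf_left (G : Good k f g) {c1 x y : ℕ} (hc : VFp k f g c1 y) (ha : VFp k f g (x+1) y)
    (hcx : c1 ≤ x) : VFp k f g x y := by
  obtain ⟨a1, a2, a3⟩ := ha
  obtain ⟨b1, b2, b3⟩ := hc
  refine ⟨by omega, ?_, ?_⟩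
  · have : f (x + y) ≤ f (c1 + y) + (x + y - (c1 + y)) := G.fadd (by omega) (by omega)
    omega
  · have : g (x + 1 + y) ≤ g (x + y) + 1 := by
      have := G.gadd (s := x + y) (t := x + 1 + y) (by omega) (by omega); omega
    omega

lemma notboth (G : Good k f g) {i j : ℕ} (ha : VFp k f g (i+1) (j+1))
    (h1 : VFp k f g i (j+1)) (h2 : VFp k f g (i+1) j) : EdgeF k f g i (j+1) := by
  obtain ⟨a1, _, _⟩ := ha
  obtain ⟨_, b2, _⟩ := h1
  obtain ⟨_, _, c3⟩ := h2
  refine Or.inr ⟨by omega, ?_, ?_, ?_⟩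
  · omega
  · have : i + (j + 1 - 1) + 1 = i + (j+1) := by omega
    rw [this]; exact b2
  · have : i + (j + 1 - 1) + 1 = i + 1 + j := by omega
    rw [this]; exact c3

lemma hmin_of (G : Good k f g) {x y : ℕ} (hv : VFp k f g (x+1) (y+1))
    (hn : ¬ VFp k f g x (y+1)) :
    (∃ r, EdgeF k f g r (y+1)) ∧ x + 1 = minE k f g (y+1) := by
  obtain ⟨a1, a2, a3⟩ := hv
  -- exclude top corner
  have hrk : x + 1 + (y + 1) < k := by
    rcases Nat.lt_or_ge (x + 1 + (y+1)) k with h | h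
    · exact h
    · exfalso
      have heqk : x + 1 + (y + 1) = k := by omega
      apply hn
      have hxfk : x + 1 = f k := by
        rw [heqk] at a2 a3
        have := G.top; omega
      refine ⟨by omega, ?_, ?_⟩
      · have hix : x + (y+1) = k - 1 := by omega
        rw [hix]
        have := G.fkm; omega
      · have hix : x + (y+1) = k - 1 := by omega
        rw [hix]
        have := G.gkm; omega
  -- f (x+y+1) = x+1
  have hgm : g (x + (y+1)) + 1 ≥ g (x + 1 + (y+1)) := by
    have := G.gadd (s := x + (y+1)) (t := x + 1 + (y+1)) (by omega) (by omega); omega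
  have hfm : f (x + (y+1)) ≤ f (x + 1 + (y+1)) := G.fmono (by omega) (by omega)
  have hf1 : f (x + (y+1)) = x + 1 := by
    by_contra hcon
    exact hn ⟨by omega, by omega, by omega⟩
  have hf2 : f (x + 1 + (y+1)) = x + 1 := by omega
  have hstrict : g (x+1+(y+1)) > f (x+1+(y+1)) := G.fg' _ (by omega) (by omega)
  have hcell : CellF k f g (x+1) y := by
    refine ⟨by omega, ?_, ?_⟩
    · have hix : x + 1 + y + 1 = x + 1 + (y + 1) := by omega
      rw [hix]; omega
    · have hix : x + 1 + y + 1 = x + 1 + (y + 1) := by omega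
      rw [hix]; omega
  have hedge : EdgeF k f g (x+1) (y+1) := Or.inr ⟨by omega, by simpa using hcell⟩
  have hnotedge : ¬ EdgeF k f g x (y+1) := fun h => hn (edge_vf G h)
  refine ⟨⟨x+1, hedge⟩, ?_⟩
  have hle : minE k f g (y+1) ≤ x + 1 := minE_le hedge
  rcases Nat.lt_or_ge (minE k f g (y+1)) (x+1) with h | h
  · exfalso
    exact hnotedge (edge_convex G (minE_mem ⟨x+1, hedge⟩) hedge (by omega) (by omega))
  · omega

lemma hmin_x0 (G : Good k f g) {y : ℕ} (hv : VFp k f g 0 (y+1)) :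
    (∃ r, EdgeF k f g r (y+1)) ∧ 0 = minE k f g (y+1) := by
  obtain ⟨a1, a2, a3⟩ := hv
  simp only [Nat.zero_add] at a2 a3
  have hyk : y + 1 < k := by
    rcases Nat.lt_or_ge (y+1) k with h | h
    · exact h
    · exfalso
      have : y + 1 = k := by omega
      rw [this] at a2
      have := G.fk_pos; omega
  have hcell : CellF k f g 0 y := by
    refine ⟨by omega, ?_, ?_⟩
    · simpa using a2
    · have : f (y+1) < g (y+1) := G.fg' _ (by omega) hyk
      simpa using by omega
  have hedge : EdgeF k f g 0 (y+1) := Or.inr ⟨by omega, by simpa using hcell⟩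
  exact ⟨⟨0, hedge⟩, (Nat.eq_zero_of_le_zero (minE_le hedge)).symm⟩

lemma vf_cell (G : Good k f g) {x y : ℕ} (h : VFp k f g x y) :
    ∃ cx cy, CellF k f g cx cy ∧
      ((x = cx ∧ y = cy) ∨ (x = cx + 1 ∧ y = cy) ∨ (x = cx ∧ y = cy + 1) ∨
        (x = cx + 1 ∧ y = cy + 1)) := by
  obtain ⟨a1, a2, a3⟩ := h
  rcases Nat.lt_or_ge x (g (x+y)) with hxg | hxg
  · -- y ≥ 1, cell (x, y-1)
    have hgy : g (x+y) ≤ x + y := G.gle a1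
    have hy : 0 < y := by omega
    have hrk : x + y < k := by
      rcases Nat.lt_or_ge (x+y) k with h | h
      · exact h
      · exfalso
        have heq : x + y = k := by omega
        have e1 : g (x+y) = g k := by rw [heq]
        have e2 : f (x+y) = f k := by rw [heq]
        have := G.top
        omega
    refine ⟨x, y - 1, ⟨by omega, ?_, ?_⟩, by omega⟩
    · have e : x + (y-1) + 1 = x + y := by omega
      rw [e]; omega
    · have e : x + (y-1) + 1 = x + y := by omega
      rw [e]; omega
  · have hxg' : x = g (x+y) := by omega
    rcases Nat.lt_or_ge (f (x+y)) x with hfx | hfx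
    · -- x ≥ 1, cell (x-1, y)
      have hx : 0 < x := by omega
      have hrk : x + y < k := by
        rcases Nat.lt_or_ge (x+y) k with h | h
        · exact h
        · exfalso
          have heq : x + y = k := by omega
          have e1 : g (x+y) = g k := by rw [heq]
          have e2 : f (x+y) = f k := by rw [heq]
          have := G.top
          omega
      refine ⟨x - 1, y, ⟨by omega, ?_, ?_⟩, by omega⟩
      · have e : x - 1 + y + 1 = x + y := by omega
        rw [e]; omega
      · have e : x - 1 + y + 1 = x + y := by omega
        rw [e]; omega
    · -- f = x = g
      have hfeq : f (x+y) = x := by omega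
      have hcase : x + y = 0 ∨ x + y = k := by
        by_contra hcon
        push_neg at hcon
        have := G.fg' (x+y) (by omega) (by omega)
        omega
      rcases hcase with h0 | hk'
      · exact ⟨0, 0, cell00 G, by omega⟩
      · have hxk : f (x + y) = f k := by rw [hk']
        have hfk := G.fk_pos
        have hfklt := G.fk_lt
        have hgk : g (x + y) = g k := by rw [hk']
        have htop := G.top
        have hy : 0 < y := by omega
        have hx : 0 < x := by omega
        refine ⟨x - 1, y - 1, ⟨by omega, ?_, ?_⟩, by omega⟩
        · have e : x - 1 + (y - 1) + 1 = k - 1 := by omega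
          rw [e]
          have := G.fkm; omega
        · have e : x - 1 + (y - 1) + 1 = k - 1 := by omega
          rw [e]
          have := G.gkm; omega


def fu (p : ℕ → Pt) (s : ℕ) : ℕ := (p s).1
def fd (p : ℕ → Pt) (s : ℕ) : ℕ := (p s).2

structure Ctx (P : Finset Pt) (k : ℕ) (f g f' g' : ℕ → ℕ) : Prop where
  G : Good k f g
  G' : Good k f' g'
  cell : ∀ x j : ℕ, ((x, j) : Pt) ∈ P ↔ CellF k f g x j
  cell' : ∀ x j : ℕ, ((x, j) : Pt) ∈ P ↔ CellF k f' g' j x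
  vert : ∀ v : Pt, v ∈ vertexSet P ↔ VFp k f g v.1 v.2
  swap : ∀ x y : ℕ, VFp k f g x y ↔ VFp k f' g' y x
  hmem : ∀ a : Pt, a ∈ HMins P ↔ ((∃ r, EdgeF k f g r a.2) ∧ a.1 = minE k f g a.2)
  vmem : ∀ a : Pt, a ∈ VMins P ↔ ((∃ r, EdgeF k f' g' r a.1) ∧ a.2 = minE k f' g' a.1)

lemma rank_path {k : ℕ} {p : ℕ → Pt} (hp : IsNEPath k p) :
    ∀ i, i ≤ k → fu p i + fd p i = i := by
  intro i
  induction i with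
  | zero =>
    intro _
    show (p 0).1 + (p 0).2 = 0
    rw [hp.1]
    rfl
  | succ n ih =>
    intro hn
    have hr := ih (by omega)
    rcases hp.2 n (by omega) with e | e
    · have e1 : fu p (n+1) = fu p n + 1 := by
        show (p (n+1)).1 = (p n).1 + 1
        rw [e]; rfl
      have e2 : fd p (n+1) = fd p n := by
        show (p (n+1)).2 = (p n).2
        rw [e]; rfl
      omega
    · have e1 : fu p (n+1) = fu p n := by
        show (p (n+1)).1 = (p n).1
        rw [e]; rfl
      have e2 : fd p (n+1) = fd p n + 1 := by
        show (p (n+1)).2 = (p n).2 + 1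
        rw [e]; rfl
      omega

lemma ctx_of {P : Finset Pt} {k : ℕ} {u l : ℕ → Pt} (hd : ParaData P k u l) :
    Ctx P k (fu u) (fu l) (fd l) (fd u) := by
  obtain ⟨hk, hu, hl, htop, hle, hne, hPne, hmem⟩ := hd
  have ru := rank_path hu
  have rl := rank_path hl
  -- k ≥ 2
  have k2 : 2 ≤ k := by
    obtain ⟨c, hc⟩ := hPne
    have h := (hmem c).mp hc (c.1+1, c.2+1) (by simp [cellVerts])
    have h1 : c.1 + 1 + (c.2 + 1) ≤ k := h.1
    omega
  have G : Good k (fu u) (fu l) := by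
    refine ⟨?_, ?_, ?_, ?_, ?_, ?_, ?_, k2⟩
    · show (u 0).1 = 0
      rw [hu.1]
    · show (l 0).1 = 0
      rw [hl.1]
    · intro s hs
      rcases hu.2 s hs with e | e
      · right; show (u (s+1)).1 = (u s).1 + 1; rw [e]; rfl
      · left; show (u (s+1)).1 = (u s).1; rw [e]; rfl
    · intro s hs
      rcases hl.2 s hs with e | e
      · right; show (l (s+1)).1 = (l s).1 + 1; rw [e]; rfl
      · left; show (l (s+1)).1 = (l s).1; rw [e]; rfl
    · intro s hs; exact hle s hs
    · intro s h0 hsk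
      have h1 := hle s (by omega)
      rcases Nat.lt_or_ge (fu u s) (fu l s) with h | h
      · exact h
      · exfalso
        apply hne s h0 hsk
        have e1 : fu u s = fu l s := le_antisymm h1 h
        have r1 := ru s (by omega)
        have r2 := rl s (by omega)
        have e2 : fd u s = fd l s := by omega
        exact Prod.ext e1 e2
    · show (u k).1 = (l k).1
      rw [htop]
  have G' : Good k (fd l) (fd u) := by
    refine ⟨?_, ?_, ?_, ?_, ?_, ?_, ?_, k2⟩
    · show (l 0).2 = 0
      rw [hl.1]
    · show (u 0).2 = 0
      rw [hu.1]
    · intro s hs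
      rcases hl.2 s hs with e | e
      · left; show (l (s+1)).2 = (l s).2; rw [e]; rfl
      · right; show (l (s+1)).2 = (l s).2 + 1; rw [e]; rfl
    · intro s hs
      rcases hu.2 s hs with e | e
      · left; show (u (s+1)).2 = (u s).2; rw [e]; rfl
      · right; show (u (s+1)).2 = (u s).2 + 1; rw [e]; rfl
    · intro s hs
      have h1 : fu u s ≤ fu l s := hle s hs
      have r1 := ru s hs
      have r2 := rl s hs
      omega
    · intro s h0 hsk
      have h1 : fu u s ≤ fu l s := hle s (by omega)
      have r1 := ru s (by omega)
      have r2 := rl s (by omega)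
      rcases Nat.lt_or_ge (fd l s) (fd u s) with h | h
      · exact h
      · exfalso
        apply hne s h0 hsk
        have e1 : fu u s = fu l s := by omega
        have e2 : fd u s = fd l s := by omega
        exact Prod.ext e1 e2
    · show (l k).2 = (u k).2
      rw [htop]
  have hcell : ∀ x j : ℕ, ((x, j) : Pt) ∈ P ↔ CellF k (fu u) (fu l) x j := by
    intro x j
    rw [hmem (x, j)]
    constructor
    · intro h
      have h1 := h (x, j+1) (by simp [cellVerts])
      have h2 := h (x+1, j) (by simp [cellVerts])
      have h3 := h (x+1, j+1) (by simp [cellVerts])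
      have a1 : x + (j+1) ≤ k ∧ fu u (x + (j+1)) ≤ x ∧ x ≤ fu l (x + (j+1)) := h1
      have a2 : x + 1 + j ≤ k ∧ fu u (x+1+j) ≤ x+1 ∧ x+1 ≤ fu l (x+1+j) := h2
      have a3 : x + 1 + (j+1) ≤ k ∧ fu u (x+1+(j+1)) ≤ x+1 ∧ x+1 ≤ fu l (x+1+(j+1)) := h3
      have e1 : x + (j+1) = x+j+1 := by omega
      have e2 : x + 1 + j = x+j+1 := by omega
      have e3 : x + 1 + (j+1) = x+j+2 := by omega
      rw [e1] at a1
      rw [e2] at a2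
      rw [e3] at a3
      exact ⟨by omega, by omega, by omega⟩
    · rintro ⟨c1, c2, c3⟩
      have m1 : fu u (x+j) ≤ fu u (x+j+1) := G.fmono (by omega) (by omega)
      have m2 : fu l (x+j+1) ≤ fu l (x+j) + 1 := by
        have := G.gadd (s := x+j) (t := x+j+1) (by omega) (by omega)
        omega
      have m3 : fu u (x+j+2) ≤ fu u (x+j+1) + 1 := by
        have := G.fadd (s := x+j+1) (t := x+j+2) (by omega) (by omega)
        omega
      have m4 : fu l (x+j+1) ≤ fu l (x+j+2) := G.gmono (by omega) (by omega)
      intro v hv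
      simp only [cellVerts, Finset.mem_insert, Finset.mem_singleton] at hv
      rcases hv with rfl | rfl | rfl | rfl
      · refine ⟨?_, ?_, ?_⟩
        · show x + j ≤ k; omega
        · show fu u (x+j) ≤ x; omega
        · show x ≤ fu l (x+j); omega
      · refine ⟨?_, ?_, ?_⟩
        · show x + 1 + j ≤ k; omega
        · show fu u (x+1+j) ≤ x+1
          have e : x+1+j = x+j+1 := by omega
          rw [e]; omega
        · show x+1 ≤ fu l (x+1+j)
          have e : x+1+j = x+j+1 := by omega
          rw [e]; omega
      · refine ⟨?_, ?_, ?_⟩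
        · show x + (j+1) ≤ k; omega
        · show fu u (x+(j+1)) ≤ x
          have e : x+(j+1) = x+j+1 := by omega
          rw [e]; omega
        · show x ≤ fu l (x+(j+1))
          have e : x+(j+1) = x+j+1 := by omega
          rw [e]; omega
      · refine ⟨?_, ?_, ?_⟩
        · show x + 1 + (j+1) ≤ k; omega
        · show fu u (x+1+(j+1)) ≤ x+1
          have e : x+1+(j+1) = x+j+2 := by omega
          rw [e]; omega
        · show x+1 ≤ fu l (x+1+(j+1))
          have e : x+1+(j+1) = x+j+2 := by omega
          rw [e]; omega
  have hcell' : ∀ x j : ℕ, ((x, j) : Pt) ∈ P ↔ CellF k (fd l) (fd u) j x := by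
    intro x j
    rw [hcell x j]
    constructor
    · rintro ⟨c1, c2, c3⟩
      have r1 := ru (x+j+1) (by omega)
      have r2 := rl (x+j+1) (by omega)
      refine ⟨by omega, ?_, ?_⟩
      · show fd l (j+x+1) ≤ j
        have e : j+x+1 = x+j+1 := by omega
        rw [e]; omega
      · show j+1 ≤ fd u (j+x+1)
        have e : j+x+1 = x+j+1 := by omega
        rw [e]; omega
    · rintro ⟨c1, c2, c3⟩
      have e : j+x+1 = x+j+1 := by omega
      rw [e] at c2 c3
      have r1 := ru (x+j+1) (by omega)
      have r2 := rl (x+j+1) (by omega)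
      exact ⟨by omega, by omega, by omega⟩
  have hvert : ∀ v : Pt, v ∈ vertexSet P ↔ VFp k (fu u) (fu l) v.1 v.2 := by
    intro v
    unfold vertexSet
    rw [Finset.mem_biUnion]
    constructor
    · rintro ⟨c, hc, hvc⟩
      exact (hmem c).mp hc v hvc
    · intro hv
      obtain ⟨cx, cy, hcf, hco⟩ := vf_cell G hv
      refine ⟨(cx, cy), (hcell cx cy).mpr hcf, ?_⟩
      have hv' : v = (v.1, v.2) := rfl
      rw [hv']
      simp only [cellVerts, Finset.mem_insert, Finset.mem_singleton, Prod.mk.injEq]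
      omega
  have hswap : ∀ x y : ℕ, VFp k (fu u) (fu l) x y ↔ VFp k (fd l) (fd u) y x := by
    intro x y
    constructor
    · rintro ⟨h1, h2, h3⟩
      have r1 := ru (x+y) h1
      have r2 := rl (x+y) h1
      refine ⟨by omega, ?_, ?_⟩
      · show fd l (y+x) ≤ y
        have e : y+x = x+y := by omega
        rw [e]; omega
      · show y ≤ fd u (y+x)
        have e : y+x = x+y := by omega
        rw [e]; omega
    · rintro ⟨h1, h2, h3⟩
      have e : y+x = x+y := by omega
      rw [e] at h2 h3
      have r1 := ru (x+y) (by omega)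
      have r2 := rl (x+y) (by omega)
      exact ⟨by omega, by omega, by omega⟩
  have hedge : ∀ r j, HEdge P r j ↔ EdgeF k (fu u) (fu l) r j := by
    intro r j
    constructor
    · rintro (h | ⟨hj, h⟩)
      · exact Or.inl ((hcell r j).mp h)
      · exact Or.inr ⟨hj, (hcell r (j-1)).mp h⟩
    · rintro (h | ⟨hj, h⟩)
      · exact Or.inl ((hcell r j).mpr h)
      · exact Or.inr ⟨hj, (hcell r (j-1)).mpr h⟩
  have hedge' : ∀ r i, VEdge P i r ↔ EdgeF k (fd l) (fd u) r i := by
    intro r i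
    constructor
    · rintro (h | ⟨hi, h⟩)
      · exact Or.inl ((hcell' i r).mp h)
      · exact Or.inr ⟨hi, (hcell' (i-1) r).mp h⟩
    · rintro (h | ⟨hi, h⟩)
      · exact Or.inl ((hcell' i r).mpr h)
      · exact Or.inr ⟨hi, (hcell' (i-1) r).mpr h⟩
  have hmaxh : ∀ i m j, MaxHInterval P i m j ↔ MaxIFp k (fu u) (fu l) i m j := by
    intro i m j
    unfold MaxHInterval MaxIFp
    simp only [hedge]
  have hmaxv : ∀ i j m, MaxVInterval P i j m ↔ MaxIFp k (fd l) (fd u) j m i := by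
    intro i j m
    unfold MaxVInterval MaxIFp
    simp only [hedge']
  refine ⟨G, G', hcell, hcell', hvert, hswap, ?_, ?_⟩
  · intro a
    show (∃ m, MaxHInterval P a.1 m a.2) ↔ _
    rw [← maxI_iff G]
    constructor
    · rintro ⟨m, hm⟩; exact ⟨m, (hmaxh _ _ _).mp hm⟩
    · rintro ⟨m, hm⟩; exact ⟨m, (hmaxh _ _ _).mpr hm⟩
  · intro a
    show (∃ m, MaxVInterval P a.1 a.2 m) ↔ _
    rw [← maxI_iff G']
    constructor
    · rintro ⟨m, hm⟩; exact ⟨m, (hmaxv _ _ _).mp hm⟩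
    · rintro ⟨m, hm⟩; exact ⟨m, (hmaxv _ _ _).mpr hm⟩

variable {P : Finset Pt} {k : ℕ} {f g f' g' : ℕ → ℕ}

lemma hmins_vf (C : Ctx P k f g f' g') {a : Pt} (ha : a ∈ HMins P) :
    VFp k f g a.1 a.2 := by
  obtain ⟨hne, heq⟩ := (C.hmem a).mp ha
  have hE : EdgeF k f g a.1 a.2 := by rw [heq]; exact minE_mem hne
  exact edge_vf C.G hE

lemma vmins_vf (C : Ctx P k f g f' g') {a : Pt} (ha : a ∈ VMins P) :
    VFp k f g a.1 a.2 := by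
  obtain ⟨hne, heq⟩ := (C.vmem a).mp ha
  have hE : EdgeF k f' g' a.2 a.1 := by rw [heq]; exact minE_mem hne
  exact (C.swap a.1 a.2).mpr (edge_vf C.G' hE)

lemma irr_of_mins (C : Ctx P k f g f' g') {a : Pt} (h0 : a ≠ (0,0))
    (hm : a ∈ HMins P ∨ a ∈ VMins P) : JoinIrred (vertexSet P) a := by
  obtain ⟨x, y⟩ := a
  have hV : VFp k f g x y := by
    rcases hm with h | h
    · exact hmins_vf C h
    · exact vmins_vf C h
  have hcontra : ∀ i0 j0, x = i0+1 → y = j0+1 → VFp k f g i0 (j0+1) →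
      VFp k f g (i0+1) j0 → False := by
    intro i0 j0 ex ey n1 n2
    have hVa : VFp k f g (i0+1) (j0+1) := by rw [← ex, ← ey]; exact hV
    rcases hm with h | h
    · obtain ⟨hne, heq⟩ := (C.hmem (x,y)).mp h
      have heq' : x = minE k f g y := heq
      have hEE := notboth C.G hVa n1 n2
      have hl := minE_le hEE
      rw [ey] at heq'
      omega
    · obtain ⟨hne, heq⟩ := (C.vmem (x,y)).mp h
      have heq' : y = minE k f' g' x := heq
      have hEE := notboth C.G' ((C.swap _ _).mp hVa) ((C.swap _ _).mp n2) ((C.swap _ _).mp n1)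
      have hl := minE_le hEE
      rw [ex] at heq'
      omega
  refine ⟨(C.vert (x,y)).mpr hV, h0, ?_⟩
  intro b hb c hc hsup
  by_contra hcon
  push_neg at hcon
  obtain ⟨hab, hac⟩ := hcon
  have hbV : VFp k f g b.1 b.2 := (C.vert b).mp hb
  have hcV : VFp k f g c.1 c.2 := (C.vert c).mp hc
  have hba : b ≤ ((x, y) : Pt) := by rw [hsup]; exact le_sup_left
  have hca : c ≤ ((x, y) : Pt) := by rw [hsup]; exact le_sup_right
  have hba1 : b.1 ≤ x := hba.1
  have hba2 : b.2 ≤ y := hba.2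
  have hca1 : c.1 ≤ x := hca.1
  have hca2 : c.2 ≤ y := hca.2
  have h1 : x = max b.1 c.1 := congrArg Prod.fst hsup
  have h2 : y = max b.2 c.2 := congrArg Prod.snd hsup
  have key : ∀ b' c' : Pt, VFp k f g b'.1 b'.2 → VFp k f g c'.1 c'.2 →
      b'.1 = x → b'.2 < y → c'.1 < x → c'.2 = y → False := by
    intro b' c' hb'' hc'' e1 e2 e3 e4
    obtain ⟨i0, hi0⟩ : ∃ i0, x = i0 + 1 := ⟨x - 1, by omega⟩
    obtain ⟨j0, hj0⟩ : ∃ j0, y = j0 + 1 := ⟨y - 1, by omega⟩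
    rw [e4, hj0] at hc''
    rw [e1, hi0] at hb''
    have hVa : VFp k f g (i0+1) (j0+1) := by rw [← hi0, ← hj0]; exact hV
    exact hcontra i0 j0 hi0 hj0 (vf_left C.G hc'' hVa (by omega))
      (vf_below C.G hb'' hVa (by omega))
  rcases max_choice b.1 c.1 with e | e <;> rcases max_choice b.2 c.2 with e' | e'
  · exact hab (Prod.ext (show x = b.1 by omega) (show y = b.2 by omega))
  · by_cases hb2 : b.2 = y
    · exact hab (Prod.ext (show x = b.1 by omega) (show y = b.2 by omega))
    · by_cases hc1 : c.1 = x
      · exact hac (Prod.ext (show x = c.1 by omega) (show y = c.2 by omega))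
      · exact key b c hbV hcV (by omega) (by omega) (by omega) (by omega)
  · by_cases hc2 : c.2 = y
    · exact hac (Prod.ext (show x = c.1 by omega) (show y = c.2 by omega))
    · by_cases hb1 : b.1 = x
      · exact hab (Prod.ext (show x = b.1 by omega) (show y = b.2 by omega))
      · exact key c b hcV hbV (by omega) (by omega) (by omega) (by omega)
  · exact hac (Prod.ext (show x = c.1 by omega) (show y = c.2 by omega))

lemma mins_of_irred (C : Ctx P k f g f' g') {a : Pt} (h : JoinIrred (vertexSet P) a) :
    a ≠ (0,0) ∧ (a ∈ HMins P ∨ a ∈ VMins P) := by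
  obtain ⟨haV, h0, hj⟩ := h
  obtain ⟨x, y⟩ := a
  have hV : VFp k f g x y := (C.vert (x,y)).mp haV
  refine ⟨h0, ?_⟩
  rcases Nat.eq_zero_or_pos x with hx0 | hx
  · have hy : 0 < y := by
      rcases Nat.eq_zero_or_pos y with hy0 | h'
      · exfalso; apply h0; rw [hx0, hy0]
      · exact h'
    obtain ⟨y0, hy0⟩ : ∃ y0, y = y0 + 1 := ⟨y - 1, by omega⟩
    left
    have hv0 : VFp k f g 0 (y0+1) := by rw [← hx0, ← hy0]; exact hV
    have hm := hmin_x0 C.G hv0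
    rw [C.hmem]
    show (∃ r, EdgeF k f g r y) ∧ x = minE k f g y
    rw [hy0, hx0]
    exact hm
  rcases Nat.eq_zero_or_pos y with hy0 | hy
  · right
    obtain ⟨x0, hx0⟩ : ∃ x0, x = x0 + 1 := ⟨x - 1, by omega⟩
    have hv0 : VFp k f' g' 0 (x0+1) := by
      have hsw := (C.swap x y).mp hV
      rw [hy0, hx0] at hsw
      exact hsw
    have hm := hmin_x0 C.G' hv0
    rw [C.vmem]
    show (∃ r, EdgeF k f' g' r x) ∧ y = minE k f' g' x
    rw [hy0, hx0]
    exact hm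
  obtain ⟨x0, hx0⟩ : ∃ x0, x = x0 + 1 := ⟨x - 1, by omega⟩
  obtain ⟨y0, hy0⟩ : ∃ y0, y = y0 + 1 := ⟨y - 1, by omega⟩
  have hVa : VFp k f g (x0+1) (y0+1) := by rw [← hx0, ← hy0]; exact hV
  by_cases hn1 : VFp k f g x0 (y0+1)
  · by_cases hn2 : VFp k f g (x0+1) y0
    · exfalso
      have hbV : ((x0, y0+1) : Pt) ∈ vertexSet P := (C.vert _).mpr hn1
      have hcV : ((x0+1, y0) : Pt) ∈ vertexSet P := (C.vert _).mpr hn2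
      have hsup : ((x,y) : Pt) = (x0, y0+1) ⊔ ((x0+1, y0) : Pt) := by
        have hs : ((x0, y0+1) : Pt) ⊔ ((x0+1, y0) : Pt) = ((x0+1, y0+1) : Pt) := by
          apply Prod.ext
          · exact max_eq_right (by omega)
          · exact max_eq_left (by omega)
        rw [hs]
        exact Prod.ext hx0 hy0
      rcases hj _ hbV _ hcV hsup with he | he
      · have h1' : x = x0 := congrArg Prod.fst he
        omega
      · have h2' : y = y0 := congrArg Prod.snd he
        omega
    · right
      have hsw := (C.swap (x0+1) (y0+1)).mp hVa
      have hn2' : ¬ VFp k f' g' y0 (x0+1) := fun hc => hn2 ((C.swap (x0+1) y0).mpr hc)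
      have hm := hmin_of C.G' hsw hn2'
      rw [C.vmem]
      show (∃ r, EdgeF k f' g' r x) ∧ y = minE k f' g' x
      rw [hx0, hy0]
      exact hm
  · left
    have hm := hmin_of C.G hVa hn1
    rw [C.hmem]
    show (∃ r, EdgeF k f g r y) ∧ x = minE k f g y
    rw [hy0, hx0]
    exact hm

lemma chainH (C : Ctx P k f g f' g') :
    IsChain (· ≤ ·) (HMins P \ {((0,0) : Pt)} : Set Pt) := by
  rintro a ⟨haH, _⟩ b ⟨hbH, _⟩ hab
  obtain ⟨hnea, heqa⟩ := (C.hmem a).mp haH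
  obtain ⟨hneb, heqb⟩ := (C.hmem b).mp hbH
  rcases le_total a.2 b.2 with h | h
  · left
    show a ≤ b
    rw [Prod.le_def]
    exact ⟨by rw [heqa, heqb]; exact minE_mono' C.G h hneb, h⟩
  · right
    show b ≤ a
    rw [Prod.le_def]
    exact ⟨by rw [heqb, heqa]; exact minE_mono' C.G h hnea, h⟩

lemma chainV (C : Ctx P k f g f' g') :
    IsChain (· ≤ ·) (VMins P \ {((0,0) : Pt)} : Set Pt) := by
  rintro a ⟨haH, _⟩ b ⟨hbH, _⟩ hab
  obtain ⟨hnea, heqa⟩ := (C.vmem a).mp haH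
  obtain ⟨hneb, heqb⟩ := (C.vmem b).mp hbH
  rcases le_total a.1 b.1 with h | h
  · left
    show a ≤ b
    rw [Prod.le_def]
    exact ⟨h, by rw [heqa, heqb]; exact minE_mono' C.G' h hneb⟩
  · right
    show b ≤ a
    rw [Prod.le_def]
    exact ⟨h, by rw [heqb, heqa]; exact minE_mono' C.G' h hnea⟩

lemma maxH (C : Ctx P k f g f' g') :
    MaxChainIn {a | JoinIrred (vertexSet P) a} (HMins P \ {((0,0):Pt)}) := by
  refine ⟨?_, chainH C, ?_⟩
  · rintro a ⟨haH, ha0⟩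
    exact irr_of_mins C (by simpa using ha0) (Or.inl haH)
  · intro c' hc'J hc'chain hsub
    apply Set.Subset.antisymm hsub
    intro a hac'
    by_contra hnot
    have hja : JoinIrred (vertexSet P) a := hc'J hac'
    obtain ⟨h0, hHV⟩ := mins_of_irred C hja
    have haH : a ∉ HMins P := fun hcon => hnot ⟨hcon, by simpa using h0⟩
    have haV : a ∈ VMins P := by
      rcases hHV with h | h
      · exact absurd h haH
      · exact h
    obtain ⟨x, y⟩ := a
    obtain ⟨hne0, heq0⟩ := (C.vmem (x,y)).mp haV
    have hne'' : ∃ r, EdgeF k f' g' r x := hne0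
    have heq' : y = minE k f' g' x := heq0
    have hx : 0 < x := by
      rcases Nat.eq_zero_or_pos x with hh | hh
      · exfalso
        apply h0
        have hz := minE0 C.G'
        apply Prod.ext
        · exact hh
        · show y = 0
          rw [heq', hh, hz]
      · exact hh
    have hEyx : EdgeF k f' g' y x := by rw [heq']; exact minE_mem hne''
    have hfind : ∀ _ : (∃ r, EdgeF k f g r (y+1)), minE k f g (y+1) < x → False := by
      intro hne2 hlt
      have hhH : ((minE k f g (y+1), y+1) : Pt) ∈ HMins P := by
        rw [C.hmem]
        exact ⟨hne2, rfl⟩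
      have hh0 : ((minE k f g (y+1), y+1) : Pt) ∉ ({((0,0):Pt)} : Set Pt) := by
        simp [Prod.ext_iff]
      have hhc' : ((minE k f g (y+1), y+1) : Pt) ∈ c' := hsub ⟨hhH, hh0⟩
      have hne3 : ((x, y) : Pt) ≠ (minE k f g (y+1), y+1) := by
        intro heq2
        have h2 : y = y + 1 := congrArg Prod.snd heq2
        omega
      rcases hc'chain hac' hhc' hne3 with hcase | hcase
      · have h1 : x ≤ minE k f g (y+1) := hcase.1
        omega
      · have h2 : y + 1 ≤ y := hcase.2
        omega
    rcases hEyx with hc1 | hc2x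
    · have hxyP : ((x, y) : Pt) ∈ P := (C.cell' x y).mpr hc1
      have hcxy : CellF k f g x y := (C.cell x y).mp hxyP
      have hE1 : EdgeF k f g x (y+1) := Or.inr ⟨by omega, by simpa using hcxy⟩
      have hm := minE_le hE1
      rcases Nat.lt_or_ge (minE k f g (y+1)) x with hlt | hge
      · exact hfind ⟨x, hE1⟩ hlt
      · have hmeq : minE k f g (y+1) = x := by omega
        rcases Nat.eq_zero_or_pos y with hy0 | hy
        · have h1 := minE1 C.G
          rw [hy0] at hmeq
          have e01 : (0:ℕ)+1 = 1 := rfl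
          rw [e01] at hmeq
          omega
        · obtain ⟨y0, hy0⟩ : ∃ y0, y = y0+1 := ⟨y - 1, by omega⟩
          have hEy : EdgeF k f g x y := Or.inl hcxy
          have hnoty : ¬ EdgeF k f g (x-1) y := by
            rintro (hcc | ⟨_, hcc⟩)
            · have hE2 : EdgeF k f g (x-1) (y+1) := Or.inr ⟨by omega, by simpa using hcc⟩
              have := minE_le hE2
              omega
            · have hP2 : ((x-1, y-1) : Pt) ∈ P := (C.cell (x-1) (y-1)).mpr hcc
              have hcc' : CellF k f' g' (y-1) (x-1) := (C.cell' (x-1) (y-1)).mp hP2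
              have hE' : EdgeF k f' g' (y-1) x := Or.inr ⟨hx, hcc'⟩
              have := minE_le hE'
              omega
          have hminy : minE k f g y = x := by
            have hle1 := minE_le hEy
            rcases Nat.lt_or_ge (minE k f g y) x with h2 | h2
            · exact absurd (edge_convex C.G (minE_mem ⟨x, hEy⟩) hEy (by omega) (by omega))
                hnoty
            · omega
          exact haH ((C.hmem (x,y)).mpr ⟨⟨x, hEy⟩, hminy.symm⟩)
    · obtain ⟨_, hc2⟩ := hc2x
      have hP2 : ((x-1, y) : Pt) ∈ P := (C.cell' (x-1) y).mpr hc2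
      have hcxy : CellF k f g (x-1) y := (C.cell (x-1) y).mp hP2
      have hE1 : EdgeF k f g (x-1) (y+1) := Or.inr ⟨by omega, by simpa using hcxy⟩
      exact hfind ⟨x-1, hE1⟩ (by have := minE_le hE1; omega)

lemma maxV (C : Ctx P k f g f' g') :
    MaxChainIn {a | JoinIrred (vertexSet P) a} (VMins P \ {((0,0):Pt)}) := by
  refine ⟨?_, chainV C, ?_⟩
  · rintro a ⟨haV, ha0⟩
    exact irr_of_mins C (by simpa using ha0) (Or.inr haV)
  · intro c' hc'J hc'chain hsub
    apply Set.Subset.antisymm hsub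
    intro a hac'
    by_contra hnot
    have hja : JoinIrred (vertexSet P) a := hc'J hac'
    obtain ⟨h0, hHV⟩ := mins_of_irred C hja
    have haVn : a ∉ VMins P := fun hcon => hnot ⟨hcon, by simpa using h0⟩
    have haH : a ∈ HMins P := by
      rcases hHV with h | h
      · exact h
      · exact absurd h haVn
    obtain ⟨x, y⟩ := a
    obtain ⟨hne0, heq0⟩ := (C.hmem (x,y)).mp haH
    have hne'' : ∃ r, EdgeF k f g r y := hne0
    have heq' : x = minE k f g y := heq0
    have hy : 0 < y := by
      rcases Nat.eq_zero_or_pos y with hh | hh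
      · exfalso
        apply h0
        have hz := minE0 C.G
        apply Prod.ext
        · show x = 0
          rw [heq', hh, hz]
        · exact hh
      · exact hh
    have hExy : EdgeF k f g x y := by rw [heq']; exact minE_mem hne''
    have hfind : ∀ _ : (∃ r, EdgeF k f' g' r (x+1)), minE k f' g' (x+1) < y → False := by
      intro hne2 hlt
      have hhV : ((x+1, minE k f' g' (x+1)) : Pt) ∈ VMins P := by
        rw [C.vmem]
        exact ⟨hne2, rfl⟩
      have hh0 : ((x+1, minE k f' g' (x+1)) : Pt) ∉ ({((0,0):Pt)} : Set Pt) := by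
        simp [Prod.ext_iff]
      have hhc' : ((x+1, minE k f' g' (x+1)) : Pt) ∈ c' := hsub ⟨hhV, hh0⟩
      have hne3 : ((x, y) : Pt) ≠ (x+1, minE k f' g' (x+1)) := by
        intro heq2
        have h2 : x = x + 1 := congrArg Prod.fst heq2
        omega
      rcases hc'chain hac' hhc' hne3 with hcase | hcase
      · have h1 : y ≤ minE k f' g' (x+1) := hcase.2
        omega
      · have h2 : x + 1 ≤ x := hcase.1
        omega
    rcases hExy with hc1 | hc2x
    · have hxyP : ((x, y) : Pt) ∈ P := (C.cell x y).mpr hc1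
      have hcyx : CellF k f' g' y x := (C.cell' x y).mp hxyP
      have hE1 : EdgeF k f' g' y (x+1) := Or.inr ⟨by omega, by simpa using hcyx⟩
      have hm := minE_le hE1
      rcases Nat.lt_or_ge (minE k f' g' (x+1)) y with hlt | hge
      · exact hfind ⟨y, hE1⟩ hlt
      · have hmeq : minE k f' g' (x+1) = y := by omega
        rcases Nat.eq_zero_or_pos x with hx0 | hx
        · have h1 := minE1 C.G'
          rw [hx0] at hmeq
          have e01 : (0:ℕ)+1 = 1 := rfl
          rw [e01] at hmeq
          omega
        · obtain ⟨x0, hx0⟩ : ∃ x0, x = x0+1 := ⟨x - 1, by omega⟩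
          have hEy : EdgeF k f' g' y x := Or.inl hcyx
          have hnoty : ¬ EdgeF k f' g' (y-1) x := by
            rintro (hcc | ⟨_, hcc⟩)
            · have hE2 : EdgeF k f' g' (y-1) (x+1) := Or.inr ⟨by omega, by simpa using hcc⟩
              have := minE_le hE2
              omega
            · have hP2 : ((x-1, y-1) : Pt) ∈ P := (C.cell' (x-1) (y-1)).mpr hcc
              have hcc' : CellF k f g (x-1) (y-1) := (C.cell (x-1) (y-1)).mp hP2
              have hE' : EdgeF k f g (x-1) y := Or.inr ⟨hy, hcc'⟩
              have := minE_le hE'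
              omega
          have hminx : minE k f' g' x = y := by
            have hle1 := minE_le hEy
            rcases Nat.lt_or_ge (minE k f' g' x) y with h2 | h2
            · exact absurd (edge_convex C.G' (minE_mem ⟨y, hEy⟩) hEy (by omega) (by omega))
                hnoty
            · omega
          exact haVn ((C.vmem (x,y)).mpr ⟨⟨y, hEy⟩, hminx.symm⟩)
    · obtain ⟨_, hc2⟩ := hc2x
      have hP2 : ((x, y-1) : Pt) ∈ P := (C.cell x (y-1)).mpr hc2
      have hcyx : CellF k f' g' (y-1) x := (C.cell' x (y-1)).mp hP2
      have hE1 : EdgeF k f' g' (y-1) (x+1) := Or.inr ⟨by omega, by simpa using hcyx⟩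
      exact hfind ⟨y-1, hE1⟩ (by have := minE_le hE1; omega)

end S19

-- STATEMENT 19
theorem stmt19 (P : Finset Pt) (hP : IsParaPoly P) :
    (∀ a : Pt, JoinIrred (vertexSet P) a ↔
      (a ≠ (0, 0) ∧ (a ∈ HMins P ∨ a ∈ VMins P))) ∧
    (HMins P \ {(0, 0)} : Set Pt) ⊆ ↑(vertexSet P) ∧
    (VMins P \ {(0, 0)} : Set Pt) ⊆ ↑(vertexSet P) ∧
    IsChain (· ≤ ·) (HMins P \ {(0, 0)} : Set Pt) ∧
    IsChain (· ≤ ·) (VMins P \ {(0, 0)} : Set Pt) ∧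
    MaxChainIn {a | JoinIrred (vertexSet P) a} (HMins P \ {(0, 0)}) ∧
    MaxChainIn {a | JoinIrred (vertexSet P) a} (VMins P \ {(0, 0)}) := by
  obtain ⟨k, u, l, hd⟩ := hP
  have C := S19.ctx_of hd
  refine ⟨?_, ?_, ?_, S19.chainH C, S19.chainV C, S19.maxH C, S19.maxV C⟩
  · intro a
    constructor
    · exact S19.mins_of_irred C
    · rintro ⟨h0, hm⟩
      exact S19.irr_of_mins C h0 hm
  · rintro a ⟨haH, _⟩
    exact Finset.mem_coe.mpr ((C.vert a).mpr (S19.hmins_vf C haH))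
  · rintro a ⟨haV, _⟩
    exact Finset.mem_coe.mpr ((C.vert a).mpr (S19.vmins_vf C haV))
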